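/- Let G be a group, F a finite normal subgroup of G, and K a finite subgroup of G. Then KF is a subgroup of G, the normalizer N_G(K) is contained in N_G(KF), and N_G(K) has finite index in N_G(KF). -/

import Mathlib

open scoped Pointwise

lemma conj_smul_eq_iff_mem_normalizer {G : Type*} [Group G] {K : Subgroup G} {g : G} :
    ConjAct.toConjAct g • K = K ↔ g ∈ Subgroup.normalizer (K : Set G) := by
  rw [Subgroup.mem_normalizer_iff]
  constructor
  · intro h n
    constructor
    · intro hn
      rw [← h]
      exact Subgroup.smul_mem_pointwise_smul _ _ _ hn
    · intro hn
      rw [← h, Subgroup.mem_pointwise_smul_iff_inv_smul_mem] at hn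
      simpa [ConjAct.smul_def, mul_assoc] using hn
  · intro h
    ext x
    rw [Subgroup.mem_pointwise_smul_iff_inv_smul_mem]
    simp only [ConjAct.smul_def, map_inv, ConjAct.ofConjAct_toConjAct, inv_inv]
    have := h (g⁻¹ * x * g)
    have e : g * (g⁻¹ * x * g) * g⁻¹ = x := by group
    rw [e] at this
    simpa [mul_assoc] using this

/-- Let `G` be a group, `F` a finite normal subgroup and
`K` a finite subgroup.  Then the set `KF = {k * f : k ∈ K, f ∈ F}` is a
subgroup of `G` (namely `K ⊔ F`), the normalizer `N_G(K)` is contained in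
`N_G(KF)`, and `N_G(K)` has finite index in `N_G(KF)`. -/
theorem normalizer_finite_index_in_normalizer_of_mul_normal
    {G : Type*} [Group G] (F K : Subgroup G) [F.Normal]
    (hF : Finite F) (hK : Finite K) :
    ((K : Set G) * (F : Set G) = ((K ⊔ F : Subgroup G) : Set G)) ∧
    Subgroup.normalizer (K : Set G) ≤ Subgroup.normalizer ((K ⊔ F : Subgroup G) : Set G) ∧
    (Subgroup.normalizer (K : Set G)).relIndex
      (Subgroup.normalizer ((K ⊔ F : Subgroup G) : Set G)) ≠ 0 := by
  have hle : Subgroup.normalizer (K : Set G) ≤ Subgroup.normalizer ((K ⊔ F : Subgroup G) : Set G) := by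
    intro g hg
    rw [← conj_smul_eq_iff_mem_normalizer] at hg ⊢
    rw [Subgroup.smul_sup, hg, Subgroup.Normal.conjAct ‹F.Normal›]
  refine ⟨(Subgroup.mul_normal K F).symm, hle, ?_⟩
  -- finiteness of K ⊔ F
  have hKF : Finite (K ⊔ F : Subgroup G) := by
    have h1 : Finite (((K : Set G) * (F : Set G)) : Set G) :=
      (Set.Finite.mul (Set.toFinite _) (Set.toFinite _)).to_subtype
    rw [← Subgroup.mul_normal K F] at h1
    exact h1
  set N := Subgroup.normalizer ((K ⊔ F : Subgroup G) : Set G)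
  have : Finite (N ⧸ (Subgroup.normalizer (K : Set G)).subgroupOf N) := by
    have hsub : ∀ c : N, ConjAct.toConjAct (c : G) • K ≤ K ⊔ F := by
      intro c
      have hc : ConjAct.toConjAct (c : G) • (K ⊔ F) = K ⊔ F :=
        conj_smul_eq_iff_mem_normalizer.mpr c.2
      calc ConjAct.toConjAct (c : G) • K
          ≤ ConjAct.toConjAct (c : G) • (K ⊔ F) :=
            Subgroup.pointwise_smul_le_pointwise_smul_iff.mpr le_sup_left
        _ = K ⊔ F := hc
    refine Finite.of_injective
      (fun q => Quotient.liftOn' q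
        (fun g => {x : ((K ⊔ F : Subgroup G) : Set G) |
          (x : G) ∈ ConjAct.toConjAct (g : G) • K})
        ?_) ?_
    · intro a b hab
      rw [QuotientGroup.leftRel_apply] at hab
      have hab' : (a : G)⁻¹ * b ∈ Subgroup.normalizer (K : Set G) := hab
      have h1 : ConjAct.toConjAct ((a : G)⁻¹ * b) • K = K :=
        conj_smul_eq_iff_mem_normalizer.mpr hab'
      have h2 : ConjAct.toConjAct ((b : N) : G) • K = ConjAct.toConjAct ((a : N) : G) • K := by
        calc ConjAct.toConjAct ((b : N) : G) • K
            = ConjAct.toConjAct ((a : G) * ((a : G)⁻¹ * b)) • K := by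
              rw [mul_inv_cancel_left]
          _ = ConjAct.toConjAct (a : G) • (ConjAct.toConjAct ((a : G)⁻¹ * b) • K) := by
              rw [map_mul, mul_smul]
          _ = ConjAct.toConjAct ((a : N) : G) • K := by rw [h1]
      simp only [h2]
    · intro q1 q2
      refine Quotient.inductionOn₂' q1 q2 fun a b h => ?_
      simp only [Quotient.liftOn'_mk''] at h
      apply Quotient.sound'
      rw [QuotientGroup.leftRel_apply]
      show (a : G)⁻¹ * b ∈ Subgroup.normalizer (K : Set G)
      rw [← conj_smul_eq_iff_mem_normalizer]
      have heq : ConjAct.toConjAct ((a : N) : G) • K = ConjAct.toConjAct ((b : N) : G) • K := by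
        ext x
        constructor
        · intro hx
          have hxm : x ∈ K ⊔ F := hsub a hx
          have hmem : (⟨x, hxm⟩ : ((K ⊔ F : Subgroup G) : Set G)) ∈
              {x : ((K ⊔ F : Subgroup G) : Set G) |
                (x : G) ∈ ConjAct.toConjAct ((a : N) : G) • K} := hx
          rw [h] at hmem
          exact hmem
        · intro hx
          have hxm : x ∈ K ⊔ F := hsub b hx
          have hmem : (⟨x, hxm⟩ : ((K ⊔ F : Subgroup G) : Set G)) ∈
              {x : ((K ⊔ F : Subgroup G) : Set G) |
                (x : G) ∈ ConjAct.toConjAct ((b : N) : G) • K} := hx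
          rw [← h] at hmem
          exact hmem
      calc ConjAct.toConjAct ((a : G)⁻¹ * b) • K
          = ConjAct.toConjAct ((a : G))⁻¹ • (ConjAct.toConjAct ((b : N) : G) • K) := by
            rw [map_mul, map_inv, mul_smul]
        _ = ConjAct.toConjAct ((a : G))⁻¹ • (ConjAct.toConjAct ((a : N) : G) • K) := by
            rw [heq]
        _ = K := inv_smul_smul (ConjAct.toConjAct (a : G)) K
  exact Subgroup.index_ne_zero_of_finite
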